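/- Let n ≥ 2 and let σ ∈ ℝ, σ ≠ 0. Set 𝔤 = 𝔨 ⊕ 𝔭_σ and γ₊ = [[−σ·Iₙ, 0], [0, 1]]. Then the normalizer N(𝔤) = { a ∈ GL(n+1, ℝ) : a·Z·a⁻¹ ∈ 𝔤 for all Z ∈ 𝔤 } equals { a ∈ GL(n+1, ℝ) : aᵀ γ₊ a = λ·γ₊ for some λ > 0 }. -/

import Mathlib

open Matrix

noncomputable section

abbrev Idx (n : ℕ) := Fin n ⊕ Unit

/-- 𝔨 = { [[A,0],[0,0]] : A skew-symmetric } -/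
def kSet (n : ℕ) : Set (Matrix (Idx n) (Idx n) ℝ) :=
  { m | ∃ A : Matrix (Fin n) (Fin n) ℝ, Aᵀ = -A ∧ m = fromBlocks A 0 0 0 }

/-- 𝔭_σ -/
def pSet (n : ℕ) (σ : ℝ) : Set (Matrix (Idx n) (Idx n) ℝ) :=
  { m | ∃ b : Fin n → ℝ,
      m = fromBlocks 0 (replicateCol Unit b) (σ • replicateRow Unit b) 0 }

/-- 𝔤 = 𝔨 ⊕ 𝔭_σ realized as the set of sums -/
def kpSet (n : ℕ) (σ : ℝ) : Set (Matrix (Idx n) (Idx n) ℝ) :=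
  { m | ∃ X ∈ kSet n, ∃ Y ∈ pSet n σ, m = X + Y }

/-- γ₊ = [[−σ·Iₙ, 0], [0, 1]] -/
def gammaPlus (n : ℕ) (σ : ℝ) : Matrix (Idx n) (Idx n) ℝ :=
  fromBlocks ((-σ) • (1 : Matrix (Fin n) (Fin n) ℝ)) 0 0 (1 : Matrix Unit Unit ℝ)

def dvec (n : ℕ) (σ : ℝ) : Idx n → ℝ := Sum.elim (fun _ => -σ) (fun _ => 1)

lemma gamma_eq_diagonal (n : ℕ) (σ : ℝ) : gammaPlus n σ = diagonal (dvec n σ) := by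
  ext i j
  rcases i with i | ⟨⟩ <;> rcases j with j | ⟨⟩ <;>
    simp [gammaPlus, dvec, diagonal_apply, Matrix.one_apply, Matrix.smul_apply] <;>
    aesop

lemma mem_kpSet_iff {n : ℕ} {σ : ℝ} (hσ : σ ≠ 0) (Z : Matrix (Idx n) (Idx n) ℝ) :
    Z ∈ kpSet n σ ↔ Zᵀ * gammaPlus n σ = -(gammaPlus n σ * Z) := by
  rw [gamma_eq_diagonal]
  constructor
  · rintro ⟨X, ⟨A, hA, rfl⟩, Y, ⟨b, rfl⟩, rfl⟩
    have hA' : ∀ i j, A j i = -(A i j) := fun i j => by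
      simpa using congrFun (congrFun hA i) j
    ext i j
    rcases i with i | ⟨⟩ <;> rcases j with j | ⟨⟩
    · simp [mul_diagonal, diagonal_mul, dvec]
      linear_combination (-σ) * hA' j i
    · simp [mul_diagonal, diagonal_mul, dvec]; try ring
    · simp [mul_diagonal, diagonal_mul, dvec]; try ring
    · simp [mul_diagonal, diagonal_mul, dvec]
  · intro h
    have h' : ∀ i j, Z j i * dvec n σ j = -(dvec n σ i * Z i j) := by
      intro i j
      have := congrFun (congrFun h i) j
      simpa [mul_diagonal, diagonal_mul] using this
    refine ⟨fromBlocks (Matrix.of fun i j => Z (Sum.inl i) (Sum.inl j)) 0 0 0,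
      ⟨Matrix.of fun i j => Z (Sum.inl i) (Sum.inl j), ?_, rfl⟩,
      fromBlocks 0 (replicateCol Unit fun i => Z (Sum.inl i) (Sum.inr ()))
        (σ • replicateRow Unit fun i => Z (Sum.inl i) (Sum.inr ())) 0,
      ⟨fun i => Z (Sum.inl i) (Sum.inr ()), rfl⟩, ?_⟩
    · ext i j
      have h1 := h' (Sum.inl i) (Sum.inl j)
      simp only [dvec, Sum.elim_inl] at h1
      have h2 : (-σ) * Z (Sum.inl j) (Sum.inl i)
          = (-σ) * (-(Z (Sum.inl i) (Sum.inl j))) := by linear_combination h1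
      have := mul_left_cancel₀ (neg_ne_zero.mpr hσ) h2
      simpa using this
    · ext i j
      rcases i with i | ⟨⟩ <;> rcases j with j | ⟨⟩
      · simp
      · simp
      · have h1 := h' (Sum.inl j) (Sum.inr ())
        simp only [dvec, Sum.elim_inl, Sum.elim_inr] at h1
        simp
        linear_combination h1
      · have h1 := h' (Sum.inr ()) (Sum.inr ())
        simp only [dvec, Sum.elim_inr] at h1
        simp
        linarith

lemma conj_iff {n : ℕ} {σ : ℝ} (hσ : σ ≠ 0) (a : (Matrix (Idx n) (Idx n) ℝ)ˣ) :
    (∀ Z ∈ kpSet n σ,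
        (a : Matrix (Idx n) (Idx n) ℝ) * Z *
          ((a⁻¹ : (Matrix (Idx n) (Idx n) ℝ)ˣ) : Matrix (Idx n) (Idx n) ℝ) ∈ kpSet n σ) ↔
    (∀ Z ∈ kpSet n σ,
        Zᵀ * ((a : Matrix (Idx n) (Idx n) ℝ)ᵀ * gammaPlus n σ * (a : Matrix (Idx n) (Idx n) ℝ))
          = -(((a : Matrix (Idx n) (Idx n) ℝ)ᵀ * gammaPlus n σ * (a : Matrix (Idx n) (Idx n) ℝ)) * Z)) := by
  set A : Matrix (Idx n) (Idx n) ℝ := (a : Matrix (Idx n) (Idx n) ℝ) with hA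
  set B : Matrix (Idx n) (Idx n) ℝ := ((a⁻¹ : (Matrix (Idx n) (Idx n) ℝ)ˣ) : Matrix (Idx n) (Idx n) ℝ) with hB
  have hAB : A * B = 1 := a.mul_inv
  have hBA : B * A = 1 := a.inv_mul
  have hABt : Aᵀ * Bᵀ = 1 := by rw [← transpose_mul, hBA, transpose_one]
  have hBAt : Bᵀ * Aᵀ = 1 := by rw [← transpose_mul, hAB, transpose_one]
  set γ : Matrix (Idx n) (Idx n) ℝ := gammaPlus n σ with hγ
  refine forall₂_congr fun Z hZ => ?_
  rw [mem_kpSet_iff hσ, ← hγ]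
  constructor
  · intro h
    have h2 := congrArg (fun X => Aᵀ * X * A) h
    simp only [transpose_mul, mul_neg, neg_mul, mul_assoc] at h2 ⊢
    rw [← mul_assoc Aᵀ Bᵀ, hABt, one_mul, hBA, mul_one] at h2
    exact h2
  · intro h
    have h2 := congrArg (fun X => Bᵀ * X * B) h
    simp only [transpose_mul, mul_neg, neg_mul, mul_assoc] at h2 ⊢
    rw [hAB, mul_one, ← mul_assoc Bᵀ Aᵀ, hBAt, one_mul] at h2
    exact h2

def Zb (n : ℕ) (σ : ℝ) (b : Fin n → ℝ) : Matrix (Idx n) (Idx n) ℝ :=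
  fromBlocks 0 (replicateCol Unit b) (σ • replicateRow Unit b) 0

lemma Zb_mem (n : ℕ) (σ : ℝ) (b : Fin n → ℝ) : Zb n σ b ∈ kpSet n σ := by
  refine ⟨fromBlocks 0 0 0 0, ⟨0, by simp, by simp⟩, Zb n σ b, ⟨b, rfl⟩, ?_⟩
  simp [Zb, fromBlocks_add]

lemma M_scalar {n : ℕ} {σ : ℝ} (M : Matrix (Idx n) (Idx n) ℝ) (hSym : Mᵀ = M)
    (h : ∀ b : Fin n → ℝ, (Zb n σ b)ᵀ * M = -(M * Zb n σ b)) :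
    M = M (Sum.inr ()) (Sum.inr ()) • gammaPlus n σ := by
  have hS : ∀ i j, M j i = M i j := fun i j => congrFun (congrFun hSym i) j
  set r := M (Sum.inr ()) (Sum.inr ()) with hr
  -- entry computations
  have key : ∀ (b : Fin n → ℝ) (i j : Idx n),
      ((Zb n σ b)ᵀ * M) i j = (-(M * Zb n σ b)) i j :=
    fun b i j => congrFun (congrFun (h b) i) j
  have hZbent : ∀ (b : Fin n → ℝ) (k : Fin n) (i j : Idx n), True := fun _ _ _ _ => trivial
  -- equation at (inr, inr) with b = single k 1 : M (inl k) (inr) = - M (inr) (inl k)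
  have hq : ∀ k : Fin n, M (Sum.inl k) (Sum.inr ()) = 0 := by
    intro k
    have h1 := key (Pi.single k 1) (Sum.inr ()) (Sum.inr ())
    simp [Zb, mul_apply, Fintype.sum_sum_type, Pi.single_apply, ite_mul, mul_ite,
      Finset.sum_ite_eq', Finset.sum_ite_eq] at h1
    have h2 := hS (Sum.inl k) (Sum.inr ())
    linarith
  have hq' : ∀ k : Fin n, M (Sum.inr ()) (Sum.inl k) = 0 := by
    intro k
    rw [hS]; exact hq k
  -- equation at (inr, inl q) : M (inl k) (inl q) = -σ * (if k = q) * r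
  have hP : ∀ k q : Fin n, M (Sum.inl k) (Sum.inl q) = if k = q then -σ * r else 0 := by
    intro k q
    have h1 := key (Pi.single k 1) (Sum.inr ()) (Sum.inl q)
    simp [Zb, mul_apply, Fintype.sum_sum_type, Pi.single_apply, ite_mul, mul_ite,
      Finset.sum_ite_eq', Finset.sum_ite_eq] at h1
    rcases eq_or_ne k q with hkq | hkq
    · subst hkq
      simp at h1 ⊢
      linarith
    · simp [hkq, hkq.symm] at h1 ⊢
      linarith
  ext i j
  rcases i with i | ⟨⟩ <;> rcases j with j | ⟨⟩
  · rw [hP i j]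
    simp [gammaPlus, Matrix.one_apply]
    by_cases hij : i = j <;> simp [hij] <;> ring
  · simp [gammaPlus, hq i]
  · simp [gammaPlus, hq' j]
  · simp [gammaPlus]; rfl

lemma quad_gamma {n : ℕ} {σ : ℝ} (v : Idx n → ℝ) :
    v ⬝ᵥ (gammaPlus n σ) *ᵥ v = ∑ k, dvec n σ k * (v k)^2 := by
  rw [gamma_eq_diagonal]
  simp only [dotProduct, mulVec_diagonal]
  exact Finset.sum_congr rfl fun k _ => by ring

lemma quad_form {n : ℕ} {σ : ℝ} (A : Matrix (Idx n) (Idx n) ℝ) (v : Idx n → ℝ) :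
    v ⬝ᵥ (Aᵀ * gammaPlus n σ * A) *ᵥ v = ∑ k, dvec n σ k * ((A *ᵥ v) k)^2 := by
  rw [mul_assoc, ← mulVec_mulVec, dotProduct_mulVec, vecMul_transpose, ← mulVec_mulVec,
    ← quad_gamma]

lemma r_pos {n : ℕ} {σ : ℝ} (hn : 2 ≤ n) (hσ : σ ≠ 0)
    (a : (Matrix (Idx n) (Idx n) ℝ)ˣ) (r : ℝ)
    (heq : (a : Matrix (Idx n) (Idx n) ℝ)ᵀ * gammaPlus n σ * (a : Matrix (Idx n) (Idx n) ℝ)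
      = r • gammaPlus n σ) : 0 < r := by
  have hne : Nonempty (Idx n) := ⟨Sum.inr ()⟩
  set A : Matrix (Idx n) (Idx n) ℝ := (a : Matrix (Idx n) (Idx n) ℝ) with hA
  set B : Matrix (Idx n) (Idx n) ℝ :=
    ((a⁻¹ : (Matrix (Idx n) (Idx n) ℝ)ˣ) : Matrix (Idx n) (Idx n) ℝ) with hB
  have hBA : B * A = 1 := a.inv_mul
  have hAv : ∀ v : Idx n → ℝ, v ≠ 0 → A *ᵥ v ≠ 0 := by
    intro v hv hAv0
    apply hv
    have h2 : B *ᵥ (A *ᵥ v) = v := by rw [mulVec_mulVec, hBA, one_mulVec]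
    rw [hAv0, mulVec_zero] at h2
    exact h2.symm
  have hmain : ∀ v : Idx n → ℝ,
      ∑ k, dvec n σ k * ((A *ᵥ v) k)^2 = r * ∑ k, dvec n σ k * (v k)^2 := by
    intro v
    rw [← quad_form, heq, smul_mulVec, dotProduct_smul, smul_eq_mul, quad_gamma]
  have hr0 : r ≠ 0 := by
    intro h0
    rw [h0, zero_smul] at heq
    have hdet := congrArg det heq
    rw [det_mul, det_mul, det_transpose, det_zero] at hdet
    have hdA : det A ≠ 0 := by
      have := (Matrix.isUnit_iff_isUnit_det A).mp a.isUnit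
      exact this.ne_zero
    have hdγ : det (gammaPlus n σ) ≠ 0 := by
      rw [gamma_eq_diagonal, det_diagonal, Fintype.prod_sum_type]
      simp [dvec]
      exact fun h => absurd h hσ
    exact (mul_ne_zero (mul_ne_zero hdA hdγ) hdA) hdet
  rcases hσ.lt_or_gt with hσneg | hσpos
  · -- σ < 0 : γ positive definite
    have hd : ∀ k : Idx n, 0 < dvec n σ k := by
      rintro (k | ⟨⟩) <;> simp [dvec] <;> linarith
    set v₀ : Idx n → ℝ := Pi.single (Sum.inr ()) 1 with hv₀
    have hv : v₀ ≠ 0 := by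
      intro h0
      have := congrFun h0 (Sum.inr ())
      simp [hv₀] at this
    have h1 := hmain v₀
    have hRHS : ∑ k, dvec n σ k * (v₀ k)^2 = 1 := by
      rw [Fintype.sum_sum_type]
      simp [dvec, hv₀, Pi.single_apply]
    rw [hRHS, mul_one] at h1
    obtain ⟨k, hk⟩ := Function.ne_iff.mp (hAv _ hv)
    have hk' : (A *ᵥ v₀) k ≠ 0 := by simpa using hk
    have hpos : 0 < ∑ k, dvec n σ k * ((A *ᵥ v₀) k)^2 :=
      Finset.sum_pos' (fun i _ => mul_nonneg (hd i).le (sq_nonneg _))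
        ⟨k, Finset.mem_univ _, mul_pos (hd k) (pow_two_pos_of_ne_zero hk')⟩
    linarith
  · -- σ > 0 : indefinite case
    by_contra hle
    push_neg at hle
    have hrneg : r < 0 := lt_of_le_of_ne hle hr0
    set φ : ((Idx n) → ℝ) →ₗ[ℝ] ℝ × ℝ :=
      LinearMap.prod (LinearMap.proj (Sum.inr () : Idx n))
        ((LinearMap.proj (Sum.inr () : Idx n)).comp (Matrix.mulVecLin A)) with hφ
    have hker : LinearMap.ker φ ≠ ⊥ := by
      intro hbot
      have h1 := LinearMap.finrank_range_add_finrank_ker φ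
      rw [hbot, finrank_bot] at h1
      have h2 : Module.finrank ℝ ↥(LinearMap.range φ) ≤ 2 := by
        have h3 := Submodule.finrank_le (LinearMap.range φ)
        simpa using h3
      have h3 : Module.finrank ℝ ((Idx n) → ℝ) = n + 1 := by
        simp [Module.finrank_fintype_fun_eq_card]
      omega
    obtain ⟨w, hw, hw0⟩ := (Submodule.ne_bot_iff _).mp hker
    have hwmem := LinearMap.mem_ker.mp hw
    have hwe : w (Sum.inr ()) = 0 := congrArg Prod.fst hwmem
    have hAwe : (A *ᵥ w) (Sum.inr ()) = 0 := congrArg Prod.snd hwmem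
    -- split the sums
    have h1 := hmain w
    rw [Fintype.sum_sum_type, Fintype.sum_sum_type] at h1
    simp only [dvec, Sum.elim_inl, Sum.elim_inr, Finset.univ_unique, Finset.sum_singleton,
      hwe, hAwe] at h1
    -- h1 : Σ -σ * (Aw i)^2 + 1*0^2 = r * (Σ -σ * (w i)^2 + 1*0^2)
    have hSx : 0 < ∑ i : Fin n, ((A *ᵥ w) (Sum.inl i))^2 := by
      obtain ⟨k, hk⟩ := Function.ne_iff.mp (hAv w hw0)
      rcases k with k | ⟨⟩
      · exact Finset.sum_pos' (fun i _ => sq_nonneg _)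
          ⟨k, Finset.mem_univ _, pow_two_pos_of_ne_zero (by simpa using hk)⟩
      · exact absurd hAwe (by simpa using hk)
    have hSw : 0 < ∑ i : Fin n, (w (Sum.inl i))^2 := by
      obtain ⟨k, hk⟩ := Function.ne_iff.mp hw0
      rcases k with k | ⟨⟩
      · exact Finset.sum_pos' (fun i _ => sq_nonneg _)
          ⟨k, Finset.mem_univ _, pow_two_pos_of_ne_zero (by simpa using hk)⟩
      · exact absurd hwe (by simpa using hk)
    have e1 : ∑ i : Fin n, -σ * ((A *ᵥ w) (Sum.inl i))^2
        = -σ * ∑ i : Fin n, ((A *ᵥ w) (Sum.inl i))^2 := by rw [Finset.mul_sum]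
    have e2 : ∑ i : Fin n, -σ * (w (Sum.inl i))^2
        = -σ * ∑ i : Fin n, (w (Sum.inl i))^2 := by rw [Finset.mul_sum]
    rw [e1, e2] at h1
    nlinarith [mul_pos hσpos hSx, mul_pos hσpos hSw, mul_pos (neg_pos.mpr hrneg) (mul_pos hσpos hSw)]

theorem stmt10 (n : ℕ) (hn : 2 ≤ n) (σ : ℝ) (hσ : σ ≠ 0) :
    ∀ a : (Matrix (Idx n) (Idx n) ℝ)ˣ,
      (∀ Z ∈ kpSet n σ,
        (a : Matrix (Idx n) (Idx n) ℝ) * Z *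
          ((a⁻¹ : _ˣ) : Matrix (Idx n) (Idx n) ℝ) ∈ kpSet n σ) ↔
      (∃ l : ℝ, 0 < l ∧
        (a : Matrix (Idx n) (Idx n) ℝ)ᵀ * gammaPlus n σ *
          (a : Matrix (Idx n) (Idx n) ℝ) = l • gammaPlus n σ) := by
  intro a
  rw [conj_iff hσ a]
  set A : Matrix (Idx n) (Idx n) ℝ := (a : Matrix (Idx n) (Idx n) ℝ) with hA
  set M : Matrix (Idx n) (Idx n) ℝ := Aᵀ * gammaPlus n σ * A with hM
  constructor
  · intro h
    have hSym : Mᵀ = M := by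
      rw [hM, gamma_eq_diagonal]
      simp [transpose_mul, mul_assoc]
    have heq := M_scalar M hSym (fun b => h _ (Zb_mem n σ b))
    exact ⟨M (Sum.inr ()) (Sum.inr ()), r_pos hn hσ a _ heq, heq⟩
  · rintro ⟨l, hl, hEq⟩
    intro Z hZ
    have hZ' := (mem_kpSet_iff hσ Z).mp hZ
    rw [hEq, Matrix.mul_smul, Matrix.smul_mul, hZ', smul_neg]
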